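/- Let G be a countable group and 𝖵 a functorial L²-subspace of G-systems. If π: X̃ → X is a relatively 𝖵-sated G-extension and α: Z → X̃ is any further G-extension, then the composite π ∘ α: Z → X is also relatively 𝖵-sated. -/

import Mathlib

open scoped InnerProductSpace

open MeasureTheory

/-- A probability-preserving `G`-system on a standard Borel probability space. -/
structure PPSystem (G : Type) [Group G] : Type 1 where
  /-- the underlying point space -/
  X : Type
  /-- the σ-algebra -/
  mX : MeasurableSpace X
  /-- the space is standard Borel -/
  sb : @StandardBorelSpace X mX
  /-- the invariant probability measure -/
  μ : @Measure X mX
  prob : @IsProbabilityMeasure X mX μ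
  /-- the action -/
  T : G → X → X
  hmp : ∀ g, @MeasurePreserving X X mX mX (T g) μ μ
  h1 : T 1 = id
  hmul : ∀ g h : G, T (g * h) = T g ∘ T h

instance {G : Type} [Group G] (S : PPSystem G) : MeasurableSpace S.X := S.mX
instance {G : Type} [Group G] (S : PPSystem G) : StandardBorelSpace S.X := S.sb
instance {G : Type} [Group G] (S : PPSystem G) : IsProbabilityMeasure S.μ := S.prob

/-- `π` is a factor map (extension) from the `G`-system `Y` onto the `G`-system `X`:
it is measure-preserving and intertwines the actions almost everywhere. -/
def IsFactorMap {G : Type} [Group G] (Y X : PPSystem G) (π : Y.X → X.X) : Prop :=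
  MeasurePreserving π Y.μ X.μ ∧ ∀ g : G, ∀ᵐ y ∂Y.μ, π (Y.T g y) = X.T g (π y)

/-- Pulling an `L²` function back along a measure-preserving map, as a linear map. -/
noncomputable def pullback {G : Type} [Group G] (Y X : PPSystem G) (π : Y.X → X.X)
    (hπ : MeasurePreserving π Y.μ X.μ) : Lp ℝ 2 X.μ →ₗ[ℝ] Lp ℝ 2 Y.μ :=
  Lp.compMeasurePreservingₗ ℝ π hπ

/-- A functorial `L²`-subspace of `G`-systems: an assignment to each system `X` of a closed
subspace `𝖵_X ≤ L²(μ_X)`, such that `𝖵_X ∘ π ⊆ 𝖵_Y` for every factor map `π : Y → X`. -/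
structure FunctorialSubspace (G : Type) [Group G] : Type 1 where
  /-- the subspace assigned to each system -/
  V : (X : PPSystem G) → Submodule ℝ (Lp ℝ 2 X.μ)
  closed : ∀ X : PPSystem G, IsClosed (V X : Set (Lp ℝ 2 X.μ))
  mono : ∀ (Y X : PPSystem G) (π : Y.X → X.X) (hπ : IsFactorMap Y X π)
    (f : Lp ℝ 2 X.μ), f ∈ V X → pullback Y X π hπ.1 f ∈ V Y

/-- `K₁` and `K₂` are relatively orthogonal over `L`: `⟪u, v⟫ = ⟪P_L u, P_L v⟫` for all
`u ∈ K₁`, `v ∈ K₂`.  The orthogonal projection `P_L u` is characterized by `P_L u ∈ L`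
together with `u - P_L u ⟂ L`, which is how it is phrased here. -/
def RelOrthOver {E : Type} [NormedAddCommGroup E] [InnerProductSpace ℝ E]
    (K₁ K₂ L : Submodule ℝ E) : Prop :=
  ∀ u ∈ K₁, ∀ v ∈ K₂, ∀ pu ∈ L, ∀ pv ∈ L,
    (∀ w ∈ L, ⟪u - pu, w⟫_ℝ = 0) → (∀ w ∈ L, ⟪v - pv, w⟫_ℝ = 0) →
    ⟪u, v⟫_ℝ = ⟪pu, pv⟫_ℝ

/-- A system `X` is `𝖵`-sated if for every extension `ξ : Y → X`, the subspaces
`L²(μ_X) ∘ ξ` and `𝖵_Y` of `L²(μ_Y)` are relatively orthogonal over `𝖵_X ∘ ξ`. -/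
def IsSated {G : Type} [Group G] (𝕍 : FunctorialSubspace G) (X : PPSystem G) : Prop :=
  ∀ (Y : PPSystem G) (ξ : Y.X → X.X) (hξ : IsFactorMap Y X ξ),
    RelOrthOver (LinearMap.range (pullback Y X ξ hξ.1)) (𝕍.V Y)
      ((𝕍.V X).map (pullback Y X ξ hξ.1))

/-- An extension `π : X̃ → X` is relatively `𝖵`-sated if for every further extension
`ξ : Y → X̃`, the subspaces `L²(μ_X) ∘ (π ∘ ξ)` and `𝖵_Y` are relatively orthogonal
over `𝖵_{X̃} ∘ ξ`. -/
def IsRelSated {G : Type} [Group G] (𝕍 : FunctorialSubspace G) (Xt X : PPSystem G)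
    (π : Xt.X → X.X) (hπ : MeasurePreserving π Xt.μ X.μ) : Prop :=
  ∀ (Y : PPSystem G) (ξ : Y.X → Xt.X) (hξ : IsFactorMap Y Xt ξ),
    RelOrthOver (LinearMap.range (pullback Y X (π ∘ ξ) (hπ.comp hξ.1))) (𝕍.V Y)
      ((𝕍.V Xt).map (pullback Y Xt ξ hξ.1))

/-- If `π : X̃ → X` is a relatively `𝖵`-sated extension and `α : Z → X̃` is a further
extension, then `π ∘ α : Z → X` is also relatively `𝖵`-sated. -/
theorem relSated_comp {G : Type} [Group G] [Countable G] (𝕍 : FunctorialSubspace G)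
    (Xt X Z : PPSystem G) (π : Xt.X → X.X) (hπ : IsFactorMap Xt X π)
    (hsat : IsRelSated 𝕍 Xt X π hπ.1)
    (α : Z.X → Xt.X) (hα : IsFactorMap Z Xt α) :
    IsRelSated 𝕍 Z X (π ∘ α) (hπ.1.comp hα.1) := by
  intro Y ξ hξ
  -- `α ∘ ξ : Y → X̃` is a factor map
  have hαξ : IsFactorMap Y Xt (α ∘ ξ) := by
    refine ⟨hα.1.comp hξ.1, fun g => ?_⟩
    have h1 := hξ.2 g
    have h2 := hξ.1.quasiMeasurePreserving.ae (hα.2 g)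
    filter_upwards [h1, h2] with y hy1 hy2
    simp only [Function.comp_apply, hy1, hy2]
  -- the two relevant subspaces
  set T : Lp ℝ 2 Xt.μ →ₗ[ℝ] Lp ℝ 2 Y.μ := pullback Y Xt (α ∘ ξ) hαξ.1 with hT
  set L' : Submodule ℝ (Lp ℝ 2 Y.μ) := (𝕍.V Xt).map T with hL'
  set L : Submodule ℝ (Lp ℝ 2 Y.μ) := (𝕍.V Z).map (pullback Y Z ξ hξ.1) with hL
  -- the pullback along `α ∘ ξ` factors through the pullback along `ξ`
  have hfact : ∀ f : Lp ℝ 2 Xt.μ,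
      T f = pullback Y Z ξ hξ.1 (pullback Z Xt α hα.1 f) := by
    intro f
    refine Lp.ext ?_
    have h1 : (T f : Y.X → ℝ) =ᵐ[Y.μ] f ∘ (α ∘ ξ) :=
      Lp.coeFn_compMeasurePreserving f hαξ.1
    have h2 : (pullback Y Z ξ hξ.1 (pullback Z Xt α hα.1 f) : Y.X → ℝ)
        =ᵐ[Y.μ] (pullback Z Xt α hα.1 f : Z.X → ℝ) ∘ ξ :=
      Lp.coeFn_compMeasurePreserving _ hξ.1
    have h3 : ((pullback Z Xt α hα.1 f : Z.X → ℝ)) =ᵐ[Z.μ] f ∘ α :=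
      Lp.coeFn_compMeasurePreserving f hα.1
    have h4 := hξ.1.quasiMeasurePreserving.ae h3
    filter_upwards [h1, h2, h4] with y hy1 hy2 hy4
    simp only [Function.comp_apply] at hy1 hy2 hy4 ⊢
    rw [hy1, hy2, hy4]
  have hL'L : L' ≤ L := by
    rintro _ ⟨f, hf, rfl⟩
    exact ⟨pullback Z Xt α hα.1 f, 𝕍.mono Z Xt α hα f hf, (hfact f).symm⟩
  have hLV : L ≤ 𝕍.V Y := by
    rintro _ ⟨f, hf, rfl⟩
    exact 𝕍.mono Y Z ξ hξ f hf
  -- `L'` has orthogonal projections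
  have hcompl : IsComplete (L' : Set (Lp ℝ 2 Y.μ)) := by
    have hiso : Isometry (T : Lp ℝ 2 Xt.μ → Lp ℝ 2 Y.μ) :=
      Lp.isometry_compMeasurePreserving hαξ.1
    have : (L' : Set (Lp ℝ 2 Y.μ)) = (T : Lp ℝ 2 Xt.μ → Lp ℝ 2 Y.μ) '' (𝕍.V Xt) :=
      Submodule.map_coe _ _
    rw [this, isComplete_image_iff hiso.isUniformInducing]
    exact (𝕍.closed Xt).isComplete
  haveI : CompleteSpace L' := hcompl.completeSpace_coe
  -- the main argument
  intro u hu v hv pu hpu pv hpv hou hov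
  have hsatY := hsat Y (α ∘ ξ) hαξ
  set pu' : Lp ℝ 2 Y.μ := (Submodule.orthogonalProjectionOnto L' u : Lp ℝ 2 Y.μ) with hpu'def
  set pv' : Lp ℝ 2 Y.μ := (Submodule.orthogonalProjectionOnto L' v : Lp ℝ 2 Y.μ) with hpv'def
  set pv'' : Lp ℝ 2 Y.μ := (Submodule.orthogonalProjectionOnto L' pv : Lp ℝ 2 Y.μ) with hpv''def
  have hpu'mem : pu' ∈ L' := (Submodule.orthogonalProjectionOnto L' u).2
  have hpv'mem : pv' ∈ L' := (Submodule.orthogonalProjectionOnto L' v).2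
  have hpv''mem : pv'' ∈ L' := (Submodule.orthogonalProjectionOnto L' pv).2
  have hou' : ∀ w ∈ L', ⟪u - pu', w⟫_ℝ = 0 := Submodule.starProjection_inner_eq_zero (K := L') u
  have hov' : ∀ w ∈ L', ⟪v - pv', w⟫_ℝ = 0 := Submodule.starProjection_inner_eq_zero (K := L') v
  have hopv : ∀ w ∈ L', ⟪pv - pv'', w⟫_ℝ = 0 := Submodule.starProjection_inner_eq_zero (K := L') pv
  have hu' : u ∈ LinearMap.range (pullback Y X (π ∘ (α ∘ ξ)) (hπ.1.comp hαξ.1)) := hu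
  -- first application of relative satedness: to `u` and `v`
  have e1 : ⟪u, v⟫_ℝ = ⟪pu', pv'⟫_ℝ :=
    hsatY u hu' v hv pu' hpu'mem pv' hpv'mem hou' hov'
  -- second application: to `u` and `pv ∈ 𝕍.V Y`
  have hpvV : pv ∈ 𝕍.V Y := hLV hpv
  have e2 : ⟪u, pv⟫_ℝ = ⟪pu', pv''⟫_ℝ :=
    hsatY u hu' pv hpvV pu' hpu'mem pv'' hpv''mem hou' hopv
  -- `⟪pu', pv'⟫ = ⟪pu', pv''⟫` since `pu' ∈ L' ≤ L` and `v - pv ⟂ L`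
  have e3 : ⟪pu', pv'⟫_ℝ = ⟪pu', pv''⟫_ℝ := by
    have h1 : ⟪v - pv', pu'⟫_ℝ = 0 := hov' pu' hpu'mem
    have h2 : ⟪pv - pv'', pu'⟫_ℝ = 0 := hopv pu' hpu'mem
    have h3 : ⟪v - pv, pu'⟫_ℝ = 0 := hov pu' (hL'L hpu'mem)
    have h4 : ⟪pv' - pv'', pu'⟫_ℝ = 0 := by
      have : pv' - pv'' = (v - pv'') - (v - pv') := by abel
      rw [this, inner_sub_left, h1]
      have : v - pv'' = (v - pv) + (pv - pv'') := by abel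
      rw [this, inner_add_left, h2, h3]
      ring
    have h6 := inner_sub_left (𝕜 := ℝ) pv' pv'' pu'
    rw [h4] at h6
    linarith [real_inner_comm pu' pv', real_inner_comm pu' pv'']
  -- `⟪u, pv⟫ = ⟪pu, pv⟫` since `u - pu ⟂ L ∋ pv`
  have e4 : ⟪u, pv⟫_ℝ = ⟪pu, pv⟫_ℝ := by
    have h := hou pv hpv
    rw [inner_sub_left] at h
    linarith
  rw [e1, e3, ← e2, e4]
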